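/- Let Q > 0, N > 0, and let m(x) = ((√(x(x+2))·Q + c(x))/(2(x+1)ln(x+1)))², where c(x) = √(x(x+2)Q² + 4(x+1)²ln(x+1)·N·ln 2). Then m is a strictly decreasing function of x on (0, ∞). -/

import Mathlib

open Real

private lemma u_anti : StrictAntiOn
    (fun z : ℝ => Real.sqrt (z * (z + 2)) / ((z + 1) * Real.log (z + 1)))
    (Set.Ioi (0 : ℝ)) := by
  apply strictAntiOn_of_deriv_neg (convex_Ioi 0)
  · apply ContinuousOn.div
    · fun_prop
    · apply ContinuousOn.mul
      · fun_prop
      · apply ContinuousOn.log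
        · fun_prop
        · intro z hz
          have hz0 : (0:ℝ) < z := hz
          intro h; linarith [h]
    · intro z hz
      have hz0 : (0:ℝ) < z := hz
      have hL : 0 < Real.log (z + 1) := Real.log_pos (by linarith)
      positivity
  · rw [interior_Ioi]
    intro z hz
    have hz0 : (0:ℝ) < z := hz
    have hA : (0:ℝ) < z * (z + 2) := by nlinarith
    have ha : 0 < Real.sqrt (z * (z + 2)) := Real.sqrt_pos.2 hA
    set a := Real.sqrt (z * (z + 2)) with ha_def
    have ha2 : a * a = z * (z + 2) := Real.mul_self_sqrt hA.le
    have hL : 0 < Real.log (z + 1) := Real.log_pos (by linarith)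
    have hden : ((z + 1) * Real.log (z + 1)) ≠ 0 := by positivity
    have hn : HasDerivAt (fun w : ℝ => Real.sqrt (w * (w + 2)))
        (1 / (2 * a) * (2 * z + 2)) z := by
      have h1 : HasDerivAt (fun w : ℝ => w * (w + 2)) (2 * z + 2) z := by
        have := (hasDerivAt_id z).mul ((hasDerivAt_id z).add_const 2)
        exact this.congr_deriv (by simp only [id]; ring)
      exact (Real.hasDerivAt_sqrt hA.ne').comp z h1
    have hd : HasDerivAt (fun w : ℝ => (w + 1) * Real.log (w + 1))
        (Real.log (z + 1) + 1) z := by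
      have h1 : HasDerivAt (fun w : ℝ => w + 1) 1 z := (hasDerivAt_id z).add_const 1
      have h2 : HasDerivAt (fun w : ℝ => Real.log (w + 1)) (1 / (z + 1)) z := by
        have := (Real.hasDerivAt_log (by linarith : z + 1 ≠ 0)).comp z h1
        simpa [Function.comp_def] using this
      have := h1.mul h2
      exact this.congr_deriv (by rw [mul_one_div_cancel (by linarith : z + 1 ≠ 0)]; ring)
    have hder : HasDerivAt (fun w : ℝ => Real.sqrt (w * (w + 2)) / ((w + 1) * Real.log (w + 1))) _ z := hn.div hd hden
    rw [hder.deriv]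
    apply div_neg_of_neg_of_pos _ (by positivity)
    have hlog : Real.log (z + 1) ≤ z := by
      have := Real.log_le_sub_one_of_pos (show (0:ℝ) < z + 1 by linarith)
      linarith
    have key : 1 / (2 * a) * (2 * z + 2) * ((z + 1) * Real.log (z + 1))
        - a * (Real.log (z + 1) + 1) = (Real.log (z + 1) - z * (z + 2)) / a := by
      field_simp
      linear_combination (-(Real.log (z + 1) + 1)) * ha2
    rw [key]
    apply div_neg_of_neg_of_pos _ ha
    nlinarith

theorem m_strictAnti (Q N : ℝ) (hQ : 0 < Q) (hN : 0 < N) :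
    StrictAntiOn (fun x : ℝ =>
      ((Real.sqrt (x * (x + 2)) * Q
          + Real.sqrt (x * (x + 2) * Q ^ 2
              + 4 * (x + 1) ^ 2 * Real.log (x + 1) * (N * Real.log 2)))
        / (2 * (x + 1) * Real.log (x + 1))) ^ 2)
      (Set.Ioi (0 : ℝ)) := by
  set K := N * Real.log 2 with hK_def
  have hK : 0 < K := mul_pos hN (Real.log_pos (by norm_num))
  set u : ℝ → ℝ := fun z => Real.sqrt (z * (z + 2)) / ((z + 1) * Real.log (z + 1)) with hu_def
  -- rewrite the function
  have key : ∀ z : ℝ, 0 < z →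
      (Real.sqrt (z * (z + 2)) * Q
          + Real.sqrt (z * (z + 2) * Q ^ 2
              + 4 * (z + 1) ^ 2 * Real.log (z + 1) * K))
        / (2 * (z + 1) * Real.log (z + 1))
      = (Q * u z + Real.sqrt ((Q * u z) ^ 2 + 4 * K / Real.log (z + 1))) / 2 := by
    intro z hz
    have hA : (0:ℝ) < z * (z + 2) := by nlinarith
    have hL : 0 < Real.log (z + 1) := Real.log_pos (by linarith)
    have hc : 0 < (z + 1) * Real.log (z + 1) := by positivity
    have ha2 : (Real.sqrt (z * (z + 2))) ^ 2 = z * (z + 2) := Real.sq_sqrt hA.le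
    have harg : z * (z + 2) * Q ^ 2 + 4 * (z + 1) ^ 2 * Real.log (z + 1) * K
        = ((z + 1) * Real.log (z + 1)) ^ 2 * ((Q * u z) ^ 2 + 4 * K / Real.log (z + 1)) := by
      simp only [hu_def]
      set a := Real.sqrt (z * (z + 2)) with ha_def
      field_simp
      linear_combination (-Q ^ 2) * ha2
    rw [harg, Real.sqrt_mul (sq_nonneg _), Real.sqrt_sq hc.le]
    simp only [hu_def]
    field_simp
  intro x hx y hy hxy
  have hx0 : (0:ℝ) < x := hx
  have hy0 : (0:ℝ) < y := hy
  simp only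
  rw [key x hx0, key y hy0]
  have hLx : 0 < Real.log (x + 1) := Real.log_pos (by linarith)
  have hLy : 0 < Real.log (y + 1) := Real.log_pos (by linarith)
  have huy : 0 < u y := by
    have hA : (0:ℝ) < y * (y + 2) := by nlinarith
    have := Real.sqrt_pos.2 hA
    simp only [hu_def]
    positivity
  have hu_lt : u y < u x := u_anti hx hy hxy
  have hLlt : Real.log (x + 1) < Real.log (y + 1) :=
    Real.log_lt_log (by linarith) (by linarith)
  have hdiv : 4 * K / Real.log (y + 1) < 4 * K / Real.log (x + 1) :=
    div_lt_div_of_pos_left (by positivity) hLx hLlt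
  have hQu : Q * u y < Q * u x := by
    exact mul_lt_mul_of_pos_left hu_lt hQ
  have hsq : (Q * u y) ^ 2 < (Q * u x) ^ 2 := by
    have h1 : 0 < Q * u y := by positivity
    exact pow_lt_pow_left₀ hQu h1.le (by norm_num)
  have hsqrt : Real.sqrt ((Q * u y) ^ 2 + 4 * K / Real.log (y + 1))
      < Real.sqrt ((Q * u x) ^ 2 + 4 * K / Real.log (x + 1)) := by
    apply Real.sqrt_lt_sqrt (by positivity)
    linarith
  have hF : (Q * u y + Real.sqrt ((Q * u y) ^ 2 + 4 * K / Real.log (y + 1))) / 2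
      < (Q * u x + Real.sqrt ((Q * u x) ^ 2 + 4 * K / Real.log (x + 1))) / 2 := by
    linarith
  apply pow_lt_pow_left₀ hF _ (by norm_num)
  have : 0 ≤ Real.sqrt ((Q * u y) ^ 2 + 4 * K / Real.log (y + 1)) := Real.sqrt_nonneg _
  positivity
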